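/- If γ, δ, σ, ε, ω : ℝ → ℝ are essentially bounded functions, g is the Arrhenius function, and for u = (u₁, u₂) ∈ L²(ℝ)² we define F(u)(x) = γ(x)u₁(x) + δ(x)g(u₁(x))u₁(x) + σ(x)g(u₁(x)) + ε(x)u₂(x) + (ε(x)+ω(x))(-u₁(x)), then F maps L²(ℝ)² to L²(ℝ) and is Lipschitz: ‖F(v) - F(w)‖_{L²} ≤ κ·max(‖v₁-w₁‖_{L²}, ‖v₂-w₂‖_{L²}) for a constant κ depending only on E and the L∞-norms of the coefficients. -/

import Mathlib

open MeasureTheory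
open scoped NNReal ENNReal

noncomputable def arrhenius (E : ℝ) (θ : ℝ) : ℝ :=
  if 0 < θ then Real.exp (-E / θ) else 0

/-- The source map `F(u)(x) = γu₁ + δ g(u₁)u₁ + σ g(u₁) + ε u₂ + (ε+ω)(-u₁)`. -/
noncomputable def sourceMap (E : ℝ) (γ δ σ ε ω : ℝ → ℝ) (u₁ u₂ : ℝ → ℝ) (x : ℝ) : ℝ :=
  γ x * u₁ x + δ x * arrhenius E (u₁ x) * u₁ x + σ x * arrhenius E (u₁ x)
    + ε x * u₂ x + (ε x + ω x) * (-u₁ x)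


lemma arr_nonneg (E θ : ℝ) : 0 ≤ arrhenius E θ := by
  unfold arrhenius; split <;> positivity

lemma arr_pos {E θ : ℝ} (h : 0 < θ) : arrhenius E θ = Real.exp (-E / θ) := if_pos h
lemma arr_npos {E θ : ℝ} (h : ¬ 0 < θ) : arrhenius E θ = 0 := if_neg h

lemma arr_le_one {E : ℝ} (hE : 0 < E) (θ : ℝ) : arrhenius E θ ≤ 1 := by
  unfold arrhenius; split
  · exact Real.exp_le_one_iff.mpr (by rw [neg_div]; simp; positivity)
  · norm_num

lemma exp_neg_div_le {E a : ℝ} (hE : 0 < E) (ha : 0 < a) : Real.exp (-E / a) ≤ a / E := by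
  rw [neg_div, Real.exp_neg]
  rw [inv_le_comm₀ (Real.exp_pos _) (by positivity)]
  calc (a / E)⁻¹ = E / a := by rw [inv_div]
  _ ≤ E / a + 1 := by linarith
  _ ≤ Real.exp (E / a) := Real.add_one_le_exp _

lemma exp_neg_div_le_sq {E a : ℝ} (hE : 0 < E) (ha : 0 < a) :
    Real.exp (-E / a) ≤ 4 * (a / E) ^ 2 := by
  have h := exp_neg_div_le (E := E/2) (a := a) (by positivity) ha
  have h2 : Real.exp (-E / a) = Real.exp (-(E/2) / a) ^ 2 := by
    rw [← Real.exp_nat_mul]; ring_nf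
  rw [h2]
  calc Real.exp (-(E/2)/a) ^ 2 ≤ (a / (E/2)) ^ 2 := by
        apply pow_le_pow_left₀ (le_of_lt (Real.exp_pos _)) h
  _ = 4 * (a / E) ^ 2 := by field_simp; ring

lemma arr_mono {E : ℝ} (hE : 0 < E) : Monotone (arrhenius E) := by
  intro b a hba
  unfold arrhenius
  split <;> split
  · apply Real.exp_le_exp.mpr
    rw [neg_div, neg_div, neg_le_neg_iff]
    apply div_le_div_of_nonneg_left hE.le (by assumption) hba
  · rename_i h1 h2; exact absurd (h1.trans_le hba) h2
  · positivity
  · exact le_rfl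

-- key intermediate: for 0 < b ≤ a, exp(-E/a) - exp(-E/b) ≤ exp(-E/a) * (E/b - E/a)
lemma exp_diff_le {E a b : ℝ} (hb : 0 < b) (hba : b ≤ a) :
    Real.exp (-E/a) - Real.exp (-E/b) ≤ Real.exp (-E/a) * (E/b - E/a) := by
  have ha : 0 < a := hb.trans_le hba
  have h1 : Real.exp (-E/b) = Real.exp (-E/a) * Real.exp (E/a - E/b) := by
    rw [← Real.exp_add]; ring_nf
  have h2 : 1 + (E/a - E/b) ≤ Real.exp (E/a - E/b) := by
    have := Real.add_one_le_exp (E/a - E/b); linarith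
  nlinarith [Real.exp_pos (-E/a)]

lemma arr_sub_le {E a b : ℝ} (hE : 0 < E) (hba : b ≤ a) :
    arrhenius E a - arrhenius E b ≤ 8 / E * (a - b) := by
  rcases le_or_gt a 0 with ha | ha
  · rw [arr_npos (not_lt.mpr ha), arr_npos (not_lt.mpr (hba.trans ha))]
    have : 0 ≤ a - b := by linarith
    simp; positivity
  rcases le_or_gt b (a/2) with hb2 | hb2
  · -- arr a - arr b ≤ arr a ≤ a/E ≤ 8/E (a-b)
    have h1 : arrhenius E a ≤ a / E := by rw [arr_pos ha]; exact exp_neg_div_le hE ha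
    have h2 : 0 ≤ arrhenius E b := arr_nonneg _ _
    have h3 : a / E ≤ 8 / E * (a - b) := by
      rw [div_le_iff₀ hE] at *
      have : 8 / E * (a - b) * E = 8 * (a - b) := by field_simp
      rw [this]; linarith
    linarith
  · have hb : 0 < b := by linarith
    rw [arr_pos ha, arr_pos hb]
    have h1 := exp_diff_le (E := E) hb hba
    have h2 := exp_neg_div_le_sq hE ha
    have h3 : E/b - E/a = E * (a - b) / (a * b) := by field_simp
    have h4 : Real.exp (-E/a) * (E/b - E/a) ≤ 4 * (a/E)^2 * (E * (a-b) / (a*b)) := by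
      rw [h3] at h1 ⊢
      apply mul_le_mul_of_nonneg_right h2
        (div_nonneg (mul_nonneg hE.le (by linarith)) (by positivity))
    have h5 : 4 * (a/E)^2 * (E * (a-b) / (a*b)) ≤ 8 / E * (a - b) := by
      have key : 4 * (a/E)^2 * (E * (a-b) / (a*b)) = 4 * a * (a-b) / (E * b) := by
        field_simp
      have key2 : 8 / E * (a - b) = 8 * (a - b) / E := by ring
      rw [key, key2, div_le_div_iff₀ (by positivity) hE]
      nlinarith [mul_nonneg (mul_nonneg hE.le (by linarith : (0:ℝ) ≤ a - b)) (by linarith : (0:ℝ) ≤ 2*b - a)]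
    linarith

lemma arrMul_mono {E : ℝ} (hE : 0 < E) : Monotone (fun θ => arrhenius E θ * θ) := by
  intro b a hba
  simp only
  rcases le_or_gt a 0 with ha | ha
  · rw [arr_npos (not_lt.mpr ha), arr_npos (not_lt.mpr (hba.trans ha))]; simp
  rcases le_or_gt b 0 with hb | hb
  · rw [arr_npos (not_lt.mpr hb)]
    have := arr_nonneg E a; nlinarith
  · exact mul_le_mul (arr_mono hE hba) hba hb.le (arr_nonneg _ _)

lemma arrMul_sub_le {E a b : ℝ} (hE : 0 < E) (hba : b ≤ a) :
    arrhenius E a * a - arrhenius E b * b ≤ 2 * (a - b) := by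
  rcases le_or_gt a 0 with ha | ha
  · rw [arr_npos (not_lt.mpr ha), arr_npos (not_lt.mpr (hba.trans ha))]; simp; linarith
  rcases le_or_gt b 0 with hb | hb
  · rw [arr_npos (not_lt.mpr hb)]
    have h1 := arr_le_one hE a
    have h2 := arr_nonneg E a
    nlinarith
  · rw [arr_pos ha, arr_pos hb]
    have h1 := exp_diff_le (E := E) hb hba
    have h2 := exp_neg_div_le hE ha
    have h3 := arr_le_one hE a
    rw [arr_pos ha] at h3
    have h4 : E/b - E/a = E * (a - b) / (a * b) := by field_simp
    -- exp(-E/a)*a - exp(-E/b)*b = (a-b)*exp(-E/a) + b*(exp(-E/a)-exp(-E/b))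
    have h5 : b * (Real.exp (-E/a) - Real.exp (-E/b)) ≤ b * (Real.exp (-E/a) * (E/b - E/a)) :=
      mul_le_mul_of_nonneg_left h1 hb.le
    have h6 : b * (Real.exp (-E/a) * (E * (a-b) / (a*b))) ≤ a - b := by
      have hEb : Real.exp (-E/a) * (E * (a-b) / (a*b)) ≤ (a/E) * (E * (a-b) / (a*b)) :=
        mul_le_mul_of_nonneg_right h2 (div_nonneg (mul_nonneg hE.le (by linarith)) (by positivity))
      have : b * ((a/E) * (E * (a-b) / (a*b))) = a - b := by field_simp
      nlinarith
    rw [h4] at h5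
    nlinarith [Real.exp_pos (-E/a), Real.exp_pos (-E/b)]

lemma lip_of_mono_sub {f : ℝ → ℝ} {K : ℝ} (hK : 0 ≤ K) (hmono : Monotone f)
    (hsub : ∀ a b : ℝ, b ≤ a → f a - f b ≤ K * (a - b)) :
    LipschitzWith K.toNNReal f := by
  apply LipschitzWith.of_dist_le_mul
  have key : ∀ x y : ℝ, y ≤ x → dist (f x) (f y) ≤ K.toNNReal * dist x y := by
    intro x y h
    rw [Real.dist_eq, Real.dist_eq, abs_of_nonneg (sub_nonneg.mpr (hmono h)),
      abs_of_nonneg (sub_nonneg.mpr h), Real.coe_toNNReal _ hK]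
    exact hsub x y h
  intro x y
  rcases le_total y x with h | h
  · exact key x y h
  · rw [dist_comm, dist_comm x y]; exact key y x h

lemma arr_lipschitz {E : ℝ} (hE : 0 < E) : LipschitzWith (8 / E).toNNReal (arrhenius E) :=
  lip_of_mono_sub (by positivity) (arr_mono hE) (fun a b => arr_sub_le hE)

lemma arrMul_lipschitz {E : ℝ} (hE : 0 < E) :
    LipschitzWith (2 : ℝ).toNNReal (fun θ => arrhenius E θ * θ) :=
  lip_of_mono_sub (by norm_num) (arrMul_mono hE) (fun a b => arrMul_sub_le hE)

theorem sourceMap_lipschitz (E : ℝ) (hE : 0 < E) (γ δ σ ε ω : ℝ → ℝ)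
    (hγ : MemLp γ ⊤ volume) (hδ : MemLp δ ⊤ volume) (hσ : MemLp σ ⊤ volume)
    (hε : MemLp ε ⊤ volume) (hω : MemLp ω ⊤ volume) :
    (∀ u₁ u₂ : ℝ → ℝ, MemLp u₁ 2 volume → MemLp u₂ 2 volume →
      MemLp (sourceMap E γ δ σ ε ω u₁ u₂) 2 volume) ∧
    ∃ κ : ℝ≥0, 0 < κ ∧ ∀ v₁ v₂ w₁ w₂ : ℝ → ℝ,
      MemLp v₁ 2 volume → MemLp v₂ 2 volume →
      MemLp w₁ 2 volume → MemLp w₂ 2 volume →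
      eLpNorm (fun x => sourceMap E γ δ σ ε ω v₁ v₂ x - sourceMap E γ δ σ ε ω w₁ w₂ x)
          2 volume ≤
        κ * max (eLpNorm (fun x => v₁ x - w₁ x) 2 volume)
                (eLpNorm (fun x => v₂ x - w₂ x) 2 volume) := by
  have hLg := arr_lipschitz hE
  have hLh := arrMul_lipschitz hE
  have hg0 : arrhenius E 0 = 0 := if_neg (lt_irrefl 0)
  have hh0 : arrhenius E 0 * 0 = 0 := by ring
  constructor
  · intro u₁ u₂ hu₁ hu₂
    have hG : MemLp (fun x => arrhenius E (u₁ x)) 2 volume := hLg.comp_memLp hg0 hu₁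
    have hH : MemLp (fun x => arrhenius E (u₁ x) * u₁ x) 2 volume := hLh.comp_memLp hh0 hu₁
    have h : MemLp ((γ • u₁) + (δ • fun x => arrhenius E (u₁ x) * u₁ x)
        + (σ • fun x => arrhenius E (u₁ x)) + (ε • u₂) + ((ε + ω) • (-u₁))) 2 volume :=
      ((((hu₁.smul hγ).add (hH.smul hδ)).add
        (hG.smul hσ)).add (hu₂.smul hε)).add
        (hu₁.neg.smul (hε.add hω))
    have heq : sourceMap E γ δ σ ε ω u₁ u₂ = (γ • u₁) + (δ • fun x => arrhenius E (u₁ x) * u₁ x)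
        + (σ • fun x => arrhenius E (u₁ x)) + (ε • u₂) + ((ε + ω) • (-u₁)) := by
      funext x
      simp only [Pi.add_apply, Pi.smul_apply, Pi.neg_apply, Pi.mul_apply, smul_eq_mul, sourceMap]
      ring
    exact heq ▸ h
  · -- constants
    set A := eLpNorm γ ⊤ volume with hA
    set B := eLpNorm δ ⊤ volume with hB
    set C := eLpNorm σ ⊤ volume with hC
    set D := eLpNorm ε ⊤ volume with hD
    set W := eLpNorm ω ⊤ volume with hW
    set c : ℝ≥0∞ := ENNReal.ofReal (8 / E) with hc
    set S : ℝ≥0∞ := A + 2 * B + c * C + 2 * D + W with hS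
    have hSfin : S ≠ ⊤ := by
      simp only [hS, hc]
      refine ENNReal.add_ne_top.mpr ⟨ENNReal.add_ne_top.mpr ⟨ENNReal.add_ne_top.mpr
        ⟨ENNReal.add_ne_top.mpr ⟨hγ.eLpNorm_ne_top, ?_⟩, ?_⟩, ?_⟩, hω.eLpNorm_ne_top⟩
      · exact ENNReal.mul_ne_top (by norm_num) hδ.eLpNorm_ne_top
      · exact ENNReal.mul_ne_top ENNReal.ofReal_ne_top hσ.eLpNorm_ne_top
      · exact ENNReal.mul_ne_top (by norm_num) hε.eLpNorm_ne_top
    refine ⟨S.toNNReal + 1, by positivity, ?_⟩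
    intro v₁ v₂ w₁ w₂ hv₁ hv₂ hw₁ hw₂
    set d₁ : ℝ → ℝ := fun x => v₁ x - w₁ x with hd₁def
    set d₂ : ℝ → ℝ := fun x => v₂ x - w₂ x with hd₂def
    have hd₁ : MemLp d₁ 2 volume := hv₁.sub hw₁
    have hd₂ : MemLp d₂ 2 volume := hv₂.sub hw₂
    set N₁ := eLpNorm d₁ 2 volume with hN₁
    set N₂ := eLpNorm d₂ 2 volume with hN₂
    set M := max N₁ N₂ with hM
    have hgv : MemLp (fun x => arrhenius E (v₁ x)) 2 volume := hLg.comp_memLp hg0 hv₁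
    have hgw : MemLp (fun x => arrhenius E (w₁ x)) 2 volume := hLg.comp_memLp hg0 hw₁
    have hhv : MemLp (fun x => arrhenius E (v₁ x) * v₁ x) 2 volume := hLh.comp_memLp hh0 hv₁
    have hhw : MemLp (fun x => arrhenius E (w₁ x) * w₁ x) 2 volume := hLh.comp_memLp hh0 hw₁
    set dg : ℝ → ℝ := fun x => arrhenius E (v₁ x) - arrhenius E (w₁ x) with hdg
    set dh : ℝ → ℝ := fun x => arrhenius E (v₁ x) * v₁ x - arrhenius E (w₁ x) * w₁ x with hdh
    have hdgm : MemLp dg 2 volume := hgv.sub hgw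
    have hdhm : MemLp dh 2 volume := hhv.sub hhw
    -- memantum of each term
    have hT1 : MemLp (γ • d₁) 2 volume := hd₁.smul hγ
    have hT2 : MemLp (δ • dh) 2 volume := hdhm.smul hδ
    have hT3 : MemLp (σ • dg) 2 volume := hdgm.smul hσ
    have hT4 : MemLp (ε • d₂) 2 volume := hd₂.smul hε
    have hT5 : MemLp ((ε + ω) • (-d₁)) 2 volume := hd₁.neg.smul (hε.add hω)
    have heq : (fun x => sourceMap E γ δ σ ε ω v₁ v₂ x - sourceMap E γ δ σ ε ω w₁ w₂ x)
        = (γ • d₁) + (δ • dh) + (σ • dg) + (ε • d₂) + ((ε + ω) • (-d₁)) := by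
      funext x
      simp only [Pi.add_apply, Pi.smul_apply, Pi.neg_apply, Pi.mul_apply, smul_eq_mul, sourceMap,
        hd₁def, hd₂def, hdg, hdh]
      ring
    -- bounds on lipschitz compositions
    have hbh : eLpNorm dh 2 volume ≤ 2 * N₁ := by
      calc eLpNorm dh 2 volume ≤ eLpNorm ((2 : ℝ) • d₁) 2 volume := by
            apply eLpNorm_mono
            intro x
            have := (arrMul_lipschitz hE).dist_le_mul (v₁ x) (w₁ x)
            simp only [Real.dist_eq, Real.coe_toNNReal _ (by norm_num : (0:ℝ) ≤ 2)] at this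
            simp only [hdh, hd₁def, Pi.smul_apply, smul_eq_mul, Real.norm_eq_abs]
            rw [abs_mul]
            calc |arrhenius E (v₁ x) * v₁ x - arrhenius E (w₁ x) * w₁ x| ≤ 2 * |v₁ x - w₁ x| := this
            _ ≤ |2| * |v₁ x - w₁ x| := by norm_num
      _ = 2 * N₁ := by
            rw [eLpNorm_const_smul, Real.enorm_eq_ofReal (by norm_num : (0:ℝ) ≤ 2)]
            norm_num
            rfl
    have hbg : eLpNorm dg 2 volume ≤ c * N₁ := by
      calc eLpNorm dg 2 volume ≤ eLpNorm ((8 / E : ℝ) • d₁) 2 volume := by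
            apply eLpNorm_mono
            intro x
            have := (arr_lipschitz hE).dist_le_mul (v₁ x) (w₁ x)
            simp only [Real.dist_eq, Real.coe_toNNReal _ (by positivity : (0:ℝ) ≤ 8 / E)] at this
            simp only [hdg, hd₁def, Pi.smul_apply, smul_eq_mul, Real.norm_eq_abs]
            rw [abs_mul]
            calc |arrhenius E (v₁ x) - arrhenius E (w₁ x)| ≤ 8 / E * |v₁ x - w₁ x| := this
            _ ≤ |8 / E| * |v₁ x - w₁ x| := by
                  gcongr; exact le_abs_self _
      _ = c * N₁ := by
            rw [eLpNorm_const_smul, hc]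
            congr 1
            rw [Real.enorm_eq_ofReal (by positivity : (0:ℝ) ≤ 8 / E)]
    -- per-term eLpNorm bounds
    have hb1 : eLpNorm (γ • d₁) 2 volume ≤ A * N₁ :=
      eLpNorm_smul_le_eLpNorm_top_mul_eLpNorm 2 hd₁.1 γ
    have hb2 : eLpNorm (δ • dh) 2 volume ≤ B * (2 * N₁) :=
      (eLpNorm_smul_le_eLpNorm_top_mul_eLpNorm 2 hdhm.1 δ).trans (by gcongr)
    have hb3 : eLpNorm (σ • dg) 2 volume ≤ C * (c * N₁) :=
      (eLpNorm_smul_le_eLpNorm_top_mul_eLpNorm 2 hdgm.1 σ).trans (by gcongr)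
    have hb4 : eLpNorm (ε • d₂) 2 volume ≤ D * N₂ :=
      eLpNorm_smul_le_eLpNorm_top_mul_eLpNorm 2 hd₂.1 ε
    have hb5 : eLpNorm ((ε + ω) • (-d₁)) 2 volume ≤ (D + W) * N₁ := by
      refine (eLpNorm_smul_le_eLpNorm_top_mul_eLpNorm 2 hd₁.neg.1 (ε + ω)).trans ?_
      rw [eLpNorm_neg]
      exact mul_le_mul' (eLpNorm_add_le hε.1 hω.1 le_top) le_rfl
    have hN₁M : N₁ ≤ M := le_max_left _ _
    have hN₂M : N₂ ≤ M := le_max_right _ _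
    have hSκ : S ≤ ((S.toNNReal + 1 : ℝ≥0) : ℝ≥0∞) := by
      push_cast
      rw [ENNReal.coe_toNNReal hSfin]
      exact le_self_add
    calc eLpNorm (fun x => sourceMap E γ δ σ ε ω v₁ v₂ x - sourceMap E γ δ σ ε ω w₁ w₂ x) 2 volume
        = eLpNorm ((γ • d₁) + (δ • dh) + (σ • dg) + (ε • d₂) + ((ε + ω) • (-d₁))) 2 volume := by
          rw [heq]
    _ ≤ eLpNorm ((γ • d₁) + (δ • dh) + (σ • dg) + (ε • d₂)) 2 volume
          + eLpNorm ((ε + ω) • (-d₁)) 2 volume :=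
        eLpNorm_add_le (((hT1.add hT2).add hT3).add hT4).1 hT5.1 one_le_two
    _ ≤ eLpNorm ((γ • d₁) + (δ • dh) + (σ • dg)) 2 volume + eLpNorm (ε • d₂) 2 volume
          + eLpNorm ((ε + ω) • (-d₁)) 2 volume := by
        gcongr
        exact eLpNorm_add_le ((hT1.add hT2).add hT3).1 hT4.1 one_le_two
    _ ≤ eLpNorm ((γ • d₁) + (δ • dh)) 2 volume + eLpNorm (σ • dg) 2 volume
          + eLpNorm (ε • d₂) 2 volume + eLpNorm ((ε + ω) • (-d₁)) 2 volume := by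
        gcongr
        exact eLpNorm_add_le (hT1.add hT2).1 hT3.1 one_le_two
    _ ≤ eLpNorm (γ • d₁) 2 volume + eLpNorm (δ • dh) 2 volume + eLpNorm (σ • dg) 2 volume
          + eLpNorm (ε • d₂) 2 volume + eLpNorm ((ε + ω) • (-d₁)) 2 volume := by
        gcongr
        exact eLpNorm_add_le hT1.1 hT2.1 one_le_two
    _ ≤ A * N₁ + B * (2 * N₁) + C * (c * N₁) + D * N₂ + (D + W) * N₁ := by
        gcongr
    _ ≤ A * M + B * (2 * M) + C * (c * M) + D * M + (D + W) * M := by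
        gcongr
    _ = S * M := by rw [hS]; ring
    _ ≤ ((S.toNNReal + 1 : ℝ≥0) : ℝ≥0∞) * M := by gcongr
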